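/- (Base case of the identification induction, k = 1.) Under the mth-order Markov model together with the exponential tilting restriction, for all values of the variables, f(Y₁, O₂, …, O_{m+2}) = f(O_{m+2}, Y₁ | R₁ = 1, O₂, …, O_{m+1}) · { P(R₁ = 1 | O₂, …, O_{m+1}) + P(R₁ = 0 | O₂, …, O_{m+1}) · exp(α₁ Y₁) / c₁(O₂, …, O_{m+1}; α₁) } · f(O₂, …, O_{m+1}), where c₁(O₂,…,O_{m+1}; α₁) = E[exp(α₁ Y₁) | R₁ = 1, O₂, …, O_{m+1}]. -/

import Mathlib

open scoped Classical BigOperators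

namespace MRM

/-- Observed datum at index `j`: `some (y j)` if `r j = true` (observed), otherwise `none`
(missing, i.e. the value `?`). -/
def obs {K : ℕ} (y r : Fin K → Bool) (j : Fin K) : Option Bool :=
  if r j then some (y j) else none

/-- Probability of an event under the joint pmf `p` on outcomes and response indicators. -/
noncomputable def Pr {K : ℕ} (p : (Fin K → Bool) → (Fin K → Bool) → ℝ)
    (E : (Fin K → Bool) → (Fin K → Bool) → Prop) : ℝ :=
  ∑ y : Fin K → Bool, ∑ r : Fin K → Bool, if E y r then p y r else 0

/-- Conditional probability `P(A | C)` under `p`. -/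
noncomputable def cPr {K : ℕ} (p : (Fin K → Bool) → (Fin K → Bool) → ℝ)
    (A C : (Fin K → Bool) → (Fin K → Bool) → Prop) : ℝ :=
  Pr p (fun y r => A y r ∧ C y r) / Pr p C

/-- Event: the outcomes at the 1-based positions `lo ≤ pos ≤ hi` take the values `yv pos`.
(If `hi < lo`, or the window is out of range, this is the trivial event, matching the
convention that a vector whose lower index exceeds its upper index is the null vector.) -/
def Yeq {K : ℕ} (lo hi : ℕ) (yv : ℕ → Bool) :
    (Fin K → Bool) → (Fin K → Bool) → Prop :=
  fun y _ => ∀ j : Fin K, lo ≤ j.1 + 1 → j.1 + 1 ≤ hi → y j = yv (j.1 + 1)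

/-- Event: the response indicators at positions `lo ≤ pos ≤ hi` take the values `rv pos`. -/
def Req {K : ℕ} (lo hi : ℕ) (rv : ℕ → Bool) :
    (Fin K → Bool) → (Fin K → Bool) → Prop :=
  fun _ r => ∀ j : Fin K, lo ≤ j.1 + 1 → j.1 + 1 ≤ hi → r j = rv (j.1 + 1)

/-- Event: the observed data at positions `lo ≤ pos ≤ hi` take the values `ov pos`. -/
def Oeq {K : ℕ} (lo hi : ℕ) (ov : ℕ → Option Bool) :
    (Fin K → Bool) → (Fin K → Bool) → Prop :=
  fun y r => ∀ j : Fin K, lo ≤ j.1 + 1 → j.1 + 1 ≤ hi → obs y r j = ov (j.1 + 1)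

/-- The `m`-th order Markov model:
`p(y, r) = ∏ₖ aₖ(yₖ | ȳᵐₖ) · bₖ(rₖ | ȳᵐₖ, yₖ, o̲ᵐₖ)`, where `aₖ` and `bₖ` are strictly
positive conditional pmfs in their first argument, `aₖ` depends only on the outcomes at
1-based positions `max(1, k − m), …, k`, and `bₖ` depends only on `rₖ`, the outcomes at
positions `max(1, k − m), …, k` and the observed data at positions `k + 1, …, min(k + m, K)`.
Indices of `Fin K` are 0-based, so the 1-based paper position of `k : Fin K` is `k.1 + 1`. -/
structure Markov (K m : ℕ) where
  p : (Fin K → Bool) → (Fin K → Bool) → ℝ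
  a : Fin K → (Fin K → Bool) → ℝ
  b : Fin K → (Fin K → Bool) → (Fin K → Bool) → ℝ
  a_pos : ∀ k y, 0 < a k y
  b_pos : ∀ k y r, 0 < b k y r
  a_pmf : ∀ (k : Fin K) (y : Fin K → Bool), ∑ v : Bool, a k (Function.update y k v) = 1
  b_pmf : ∀ (k : Fin K) (y r : Fin K → Bool), ∑ v : Bool, b k y (Function.update r k v) = 1
  a_local : ∀ (k : Fin K) (y y' : Fin K → Bool),
    (∀ j : Fin K, k.1 + 1 - m ≤ j.1 + 1 → j.1 ≤ k.1 → y j = y' j) → a k y = a k y'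
  b_local : ∀ (k : Fin K) (y r y' r' : Fin K → Bool), r k = r' k →
    (∀ j : Fin K, k.1 + 1 - m ≤ j.1 + 1 → j.1 ≤ k.1 → y j = y' j) →
    (∀ j : Fin K, k.1 < j.1 → j.1 + 1 ≤ k.1 + 1 + m → obs y r j = obs y' r' j) →
    b k y r = b k y' r'
  factor : ∀ y r, p y r = ∏ k : Fin K, a k y * b k y r
  sum_one : ∑ y : Fin K → Bool, ∑ r : Fin K → Bool, p y r = 1

/-- Real value of a binary outcome. -/
def yVal (v : Bool) : ℝ := if v then 1 else 0

/-- `cₖ(ȳᵐₖ, o̲ᵐₖ; α) = E[exp(α Yₖ) | Rₖ = 1, Ȳᵐₖ = ȳᵐₖ, O̲ᵐₖ = o̲ᵐₖ]` (`k` is 1-based). -/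
noncomputable def cfun {K : ℕ} (p : (Fin K → Bool) → (Fin K → Bool) → ℝ) (m : ℕ) (α : ℝ)
    (k : ℕ) (yv : ℕ → Bool) (ov : ℕ → Option Bool) : ℝ :=
  ∑ v : Bool, Real.exp (α * yVal v) *
    cPr p (Yeq k k (fun _ => v))
      (fun y r => Req k k (fun _ => true) y r ∧ Yeq (k - m) (k - 1) yv y r ∧
        Oeq (k + 1) (k + m) ov y r)

/-- The exponential tilting restriction with sensitivity parameters `α k` (`k` is 1-based):
`f(Yₖ | Rₖ = 0, Ȳᵐₖ, O̲ᵐₖ) = f(Yₖ | Rₖ = 1, Ȳᵐₖ, O̲ᵐₖ) · exp(αₖ Yₖ) / cₖ(Ȳᵐₖ, O̲ᵐₖ; αₖ)`. -/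
def Tilt {K : ℕ} (p : (Fin K → Bool) → (Fin K → Bool) → ℝ) (m : ℕ) (α : ℕ → ℝ) : Prop :=
  ∀ (k : ℕ), 1 ≤ k → k ≤ K → ∀ (yv : ℕ → Bool) (ov : ℕ → Option Bool),
    cPr p (Yeq k k yv)
      (fun y r => Req k k (fun _ => false) y r ∧ Yeq (k - m) (k - 1) yv y r ∧
        Oeq (k + 1) (k + m) ov y r)
    = cPr p (Yeq k k yv)
        (fun y r => Req k k (fun _ => true) y r ∧ Yeq (k - m) (k - 1) yv y r ∧
          Oeq (k + 1) (k + m) ov y r)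
      * Real.exp (α k * yVal (yv k)) / cfun p m (α k) k yv ov

section Aux

variable {K m : ℕ}

lemma p_pos (M : Markov K m) (y r : Fin K → Bool) : 0 < M.p y r := by
  rw [M.factor]
  exact Finset.prod_pos fun k _ => mul_pos (M.a_pos k y) (M.b_pos k y r)

lemma Pr_eq (p : (Fin K → Bool) → (Fin K → Bool) → ℝ)
    (E : (Fin K → Bool) → (Fin K → Bool) → Prop) :
    Pr p E = ∑ x : (Fin K → Bool) × (Fin K → Bool),
      if E x.1 x.2 then p x.1 x.2 else 0 := by
  rw [Fintype.sum_prod_type]; rfl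

lemma Pr_pos {p : (Fin K → Bool) → (Fin K → Bool) → ℝ}
    (hp : ∀ y r, 0 < p y r) {E : (Fin K → Bool) → (Fin K → Bool) → Prop}
    (yw rw : Fin K → Bool) (h : E yw rw) : 0 < Pr p E := by
  rw [Pr_eq]
  refine Finset.sum_pos' (fun x _ => ?_) ⟨(yw, rw), Finset.mem_univ _, ?_⟩
  · split
    · exact (hp _ _).le
    · exact le_refl 0
  · simpa [h] using hp yw rw

lemma Pr_congr {p : (Fin K → Bool) → (Fin K → Bool) → ℝ}
    {E E' : (Fin K → Bool) → (Fin K → Bool) → Prop}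
    (h : ∀ y r, E y r ↔ E' y r) : Pr p E = Pr p E' := by
  have : E = E' := funext fun y => funext fun r => propext (h y r)
  rw [this]

lemma Pr_split {p : (Fin K → Bool) → (Fin K → Bool) → ℝ}
    (E : (Fin K → Bool) → (Fin K → Bool) → Prop) (z : Fin K) :
    Pr p E = Pr p (fun y r => E y r ∧ r z = true)
           + Pr p (fun y r => E y r ∧ r z = false) := by
  unfold Pr
  rw [← Finset.sum_add_distrib]
  refine Finset.sum_congr rfl fun y _ => ?_
  rw [← Finset.sum_add_distrib]
  refine Finset.sum_congr rfl fun r _ => ?_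
  by_cases hE : E y r <;> cases hr : r z <;> simp [hE, hr]

lemma obs_update_ne {y r : Fin K → Bool} {z j : Fin K} (h : j ≠ z) (v : Bool) :
    obs y (Function.update r z v) j = obs y r j := by
  unfold obs; rw [Function.update_of_ne h]

/-- Witness outcome configuration. -/
def ywit (ov : ℕ → Option Bool) (c : Bool) (j : Fin K) : Bool :=
  if j.1 = 0 then c else (ov (j.1 + 1)).getD false

/-- Witness response configuration. -/
def rwit (ov : ℕ → Option Bool) (i : Bool) (j : Fin K) : Bool :=
  if j.1 = 0 then i else (ov (j.1 + 1)).isSome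

lemma obs_wit (ov : ℕ → Option Bool) (c i : Bool) (j : Fin K) (hj : 1 ≤ j.1) :
    obs (ywit ov c) (rwit ov i) j = ov (j.1 + 1) := by
  have hj0 : ¬ j.1 = 0 := by omega
  unfold obs ywit rwit
  simp only [hj0, if_false]
  cases h : ov (j.1 + 1) <;> simp [h]

lemma ywit_zero (ov : ℕ → Option Bool) (c : Bool) (j : Fin K) (hj : j.1 = 0) :
    ywit ov c j = c := if_pos hj

lemma rwit_zero (ov : ℕ → Option Bool) (i : Bool) (j : Fin K) (hj : j.1 = 0) :
    rwit ov i j = i := if_pos hj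

lemma b_update_ne (M : Markov K m) {z : Fin K} (hz : z.1 = 0) {k : Fin K}
    (hk : k ≠ z) (y r : Fin K → Bool) (v : Bool) :
    M.b k y (Function.update r z v) = M.b k y r := by
  refine M.b_local k y _ y r ?_ (fun j _ _ => rfl) (fun j hj _ => ?_)
  · rw [Function.update_of_ne hk]
  · refine obs_update_ne (fun e => ?_) v
    rw [e] at hj; omega

lemma p_update (M : Markov K m) {z : Fin K} (hz : z.1 = 0) (y r : Fin K → Bool)
    (v : Bool) :
    M.p y (Function.update r z v) * M.b z y r
      = M.p y r * M.b z y (Function.update r z v) := by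
  rw [M.factor, M.factor, ← Finset.prod_erase_mul _ _ (Finset.mem_univ z),
    ← Finset.prod_erase_mul _ _ (Finset.mem_univ z)]
  have h : ∏ k ∈ Finset.univ.erase z, (M.a k y * M.b k y (Function.update r z v))
      = ∏ k ∈ Finset.univ.erase z, (M.a k y * M.b k y r) :=
    Finset.prod_congr rfl fun k hk => by
      rw [b_update_ne M hz (Finset.mem_erase.1 hk).1]
  rw [h]; ring

lemma bz_eq (M : Markov K m) (hm : 1 ≤ m) {z : Fin K} (hz : z.1 = 0)
    (y r y' r' : Fin K → Bool) (hr : r z = r' z) (hy : y z = y' z)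
    (hobs : ∀ j : Fin K, 1 ≤ j.1 → j.1 ≤ m → obs y r j = obs y' r' j) :
    M.b z y r = M.b z y' r' := by
  refine M.b_local z y r y' r' hr (fun j _ hj => ?_) (fun j hj1 hj2 => ?_)
  · have : j = z := Fin.ext (by omega)
    rw [this]; exact hy
  · exact hobs j (by omega) (by omega)

lemma swap_p (M : Markov K m) (hm : 1 ≤ m) {z : Fin K} (hz : z.1 = 0)
    (y r y' r' : Fin K → Bool) (hy : y z = y' z)
    (hobs : ∀ j : Fin K, 1 ≤ j.1 → j.1 ≤ m → obs y r j = obs y' r' j) :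
    M.p y (Function.update r z (r' z)) * M.p y' (Function.update r' z (r z))
      = M.p y r * M.p y' r' := by
  have hne : ∀ j : Fin K, 1 ≤ j.1 → j ≠ z := fun j hj e => by rw [e] at hj; omega
  have e1 : M.b z y (Function.update r z (r' z)) = M.b z y' r' :=
    bz_eq M hm hz _ _ _ _ (Function.update_self _ _ _) hy
      (fun j h1 h2 => (obs_update_ne (hne j h1) _).trans (hobs j h1 h2))
  have e2 : M.b z y' (Function.update r' z (r z)) = M.b z y r :=
    bz_eq M hm hz _ _ _ _ (Function.update_self _ _ _) hy.symm
      (fun j h1 h2 => (obs_update_ne (hne j h1) _).trans (hobs j h1 h2).symm)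
  have h1 := p_update M hz y r (r' z); rw [e1] at h1
  have h2 := p_update M hz y' r' (r z); rw [e2] at h2
  have hb : (0:ℝ) < M.b z y r * M.b z y' r' :=
    mul_pos (M.b_pos z y r) (M.b_pos z y' r')
  refine mul_right_cancel₀ (ne_of_gt hb) ?_
  calc M.p y (Function.update r z (r' z)) * M.p y' (Function.update r' z (r z))
        * (M.b z y r * M.b z y' r')
      = (M.p y (Function.update r z (r' z)) * M.b z y r)
        * (M.p y' (Function.update r' z (r z)) * M.b z y' r') := by ring
    _ = (M.p y r * M.b z y' r') * (M.p y' r' * M.b z y r) := by rw [h1, h2]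
    _ = M.p y r * M.p y' r' * (M.b z y r * M.b z y' r') := by ring

lemma cross (M : Markov K m) (hm : 1 ≤ m) {z : Fin K} (hz : z.1 = 0)
    (yv : ℕ → Bool) (ov : ℕ → Option Bool)
    (E₁ E₂ : (Fin K → Bool) → (Fin K → Bool) → Prop)
    (h₁u : ∀ y r v, E₁ y (Function.update r z v) ↔ E₁ y r)
    (h₂u : ∀ y r v, E₂ y (Function.update r z v) ↔ E₂ y r)
    (h₁f : ∀ y r, E₁ y r → y z = yv 1 ∧
      ∀ j : Fin K, 1 ≤ j.1 → j.1 ≤ m → obs y r j = ov (j.1 + 1))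
    (h₂f : ∀ y r, E₂ y r → y z = yv 1 ∧
      ∀ j : Fin K, 1 ≤ j.1 → j.1 ≤ m → obs y r j = ov (j.1 + 1)) :
    Pr M.p (fun y r => E₁ y r ∧ r z = false) * Pr M.p (fun y r => E₂ y r ∧ r z = true)
      = Pr M.p (fun y r => E₁ y r ∧ r z = true)
        * Pr M.p (fun y r => E₂ y r ∧ r z = false) := by
  have hPQ : ∀ P Q : (Fin K → Bool) → (Fin K → Bool) → Prop,
      Pr M.p P * Pr M.p Q
        = ∑ q : ((Fin K → Bool) × (Fin K → Bool)) × ((Fin K → Bool) × (Fin K → Bool)),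
            (if P q.1.1 q.1.2 then M.p q.1.1 q.1.2 else 0)
              * (if Q q.2.1 q.2.2 then M.p q.2.1 q.2.2 else 0) := by
    intro P Q
    rw [Pr_eq, Pr_eq, Finset.sum_mul_sum]
    exact (Fintype.sum_prod_type
      (fun q : ((Fin K → Bool) × (Fin K → Bool)) × ((Fin K → Bool) × (Fin K → Bool)) =>
        (if P q.1.1 q.1.2 then M.p q.1.1 q.1.2 else 0)
          * (if Q q.2.1 q.2.2 then M.p q.2.1 q.2.2 else 0))).symm
  rw [hPQ, hPQ]
  have hinv : ∀ q : ((Fin K → Bool) × (Fin K → Bool)) × ((Fin K → Bool) × (Fin K → Bool)),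
      (fun q : ((Fin K → Bool) × (Fin K → Bool)) × ((Fin K → Bool) × (Fin K → Bool)) =>
        ((q.1.1, Function.update q.1.2 z (q.2.2 z)),
         (q.2.1, Function.update q.2.2 z (q.1.2 z))))
      ((fun q : ((Fin K → Bool) × (Fin K → Bool)) × ((Fin K → Bool) × (Fin K → Bool)) =>
        ((q.1.1, Function.update q.1.2 z (q.2.2 z)),
         (q.2.1, Function.update q.2.2 z (q.1.2 z)))) q) = q := by
    rintro ⟨⟨y, r⟩, ⟨y', r'⟩⟩
    simp [Function.update_idem, Function.update_self, Function.update_eq_self]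
  apply Fintype.sum_equiv
    (⟨fun q => ((q.1.1, Function.update q.1.2 z (q.2.2 z)),
               (q.2.1, Function.update q.2.2 z (q.1.2 z))),
     fun q => ((q.1.1, Function.update q.1.2 z (q.2.2 z)),
               (q.2.1, Function.update q.2.2 z (q.1.2 z))),
     hinv, hinv⟩ : (((Fin K → Bool) × (Fin K → Bool)) × ((Fin K → Bool) × (Fin K → Bool)))
       ≃ (((Fin K → Bool) × (Fin K → Bool)) × ((Fin K → Bool) × (Fin K → Bool))))
  rintro ⟨⟨y, r⟩, ⟨y', r'⟩⟩
  simp only [Equiv.coe_fn_mk, Function.update_self, h₁u, h₂u]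
  by_cases hE1 : E₁ y r <;> by_cases hE2 : E₂ y' r' <;>
    cases hr : r z <;> cases hr' : r' z <;>
    simp [hE1, hE2, hr, hr']
  -- remaining live case: hE1, hE2, r z = false, r' z = true
  obtain ⟨hy1, ho1⟩ := h₁f y r hE1
  obtain ⟨hy2, ho2⟩ := h₂f y' r' hE2
  have := swap_p M hm hz y r y' r' (hy1.trans hy2.symm)
    (fun j a b => (ho1 j a b).trans (ho2 j a b).symm)
  rw [hr, hr'] at this
  linarith [this]

end Aux

/-- Base case of the identification induction, `k = 1`.  Under the
`m`th-order Markov model together with the exponential tilting restriction,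
`f(Y₁, O₂, …, O_{m+2})
  = f(O_{m+2}, Y₁ | R₁ = 1, O₂, …, O_{m+1})
    · { P(R₁ = 1 | O₂, …, O_{m+1}) + P(R₁ = 0 | O₂, …, O_{m+1}) · exp(α₁ Y₁) / c₁ }
    · f(O₂, …, O_{m+1})`,
where `c₁(O₂,…,O_{m+1}; α₁) = E[exp(α₁ Y₁) | R₁ = 1, O₂, …, O_{m+1}]` (this is
`cfun M.p m (α 1) 1 yv ov`). -/
theorem statement6 (K m : ℕ) (hm : 1 ≤ m) (hKm : 2 * m + 1 < K)
    (M : Markov K m) (α : ℕ → ℝ) (hT : Tilt M.p m α)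
    (yv : ℕ → Bool) (ov : ℕ → Option Bool) :
    Pr M.p (fun y r => Yeq 1 1 yv y r ∧ Oeq 2 (m + 2) ov y r)
      = cPr M.p (fun y r => Oeq (m + 2) (m + 2) ov y r ∧ Yeq 1 1 yv y r)
          (fun y r => Req 1 1 (fun _ => true) y r ∧ Oeq 2 (m + 1) ov y r)
        * (cPr M.p (Req 1 1 (fun _ => true)) (Oeq 2 (m + 1) ov)
            + cPr M.p (Req 1 1 (fun _ => false)) (Oeq 2 (m + 1) ov)
              * Real.exp (α 1 * yVal (yv 1)) / cfun M.p m (α 1) 1 yv ov)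
        * Pr M.p (Oeq 2 (m + 1) ov) := by
  have hzlt : 0 < K := by omega
  set z : Fin K := ⟨0, hzlt⟩ with hzdef
  have hz0 : z.1 = 0 := rfl
  have hReq : ∀ (i : Bool) (y r : Fin K → Bool), Req 1 1 (fun _ => i) y r ↔ r z = i := by
    intro i y r
    constructor
    · intro h; exact h z (by omega) (by omega)
    · intro h j h1 h2
      have hj : j = z := Fin.ext (by omega)
      rw [hj]; exact h
  -- split of the left-hand side
  have eL : Pr M.p (fun y r => Yeq 1 1 yv y r ∧ Oeq 2 (m + 2) ov y r)
      = Pr M.p (fun y r => (Oeq (m + 2) (m + 2) ov y r ∧ Yeq 1 1 yv y r ∧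
          Oeq 2 (m + 1) ov y r) ∧ r z = true)
      + Pr M.p (fun y r => (Oeq (m + 2) (m + 2) ov y r ∧ Yeq 1 1 yv y r ∧
          Oeq 2 (m + 1) ov y r) ∧ r z = false) := by
    refine (Pr_congr fun y r => ?_).trans (Pr_split _ z)
    constructor
    · rintro ⟨hB, hO⟩
      exact ⟨fun j h1 h2 => hO j (by omega) (by omega), hB,
        fun j h1 h2 => hO j h1 (by omega)⟩
    · rintro ⟨hC, hB, hA⟩
      refine ⟨hB, fun j h1 h2 => ?_⟩
      by_cases h : j.1 + 1 ≤ m + 1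
      · exact hA j h1 h
      · exact hC j (by omega) (by omega)
  -- the three conditional probabilities in the statement, in canonical form
  have e1 : cPr M.p (fun y r => Oeq (m + 2) (m + 2) ov y r ∧ Yeq 1 1 yv y r)
        (fun y r => Req 1 1 (fun _ => true) y r ∧ Oeq 2 (m + 1) ov y r)
      = Pr M.p (fun y r => (Oeq (m + 2) (m + 2) ov y r ∧ Yeq 1 1 yv y r ∧
          Oeq 2 (m + 1) ov y r) ∧ r z = true)
        / Pr M.p (fun y r => Oeq 2 (m + 1) ov y r ∧ r z = true) := by
    unfold cPr
    congr 1
    · refine Pr_congr fun y r => ?_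
      constructor
      · rintro ⟨⟨hC, hB⟩, hR, hA⟩
        exact ⟨⟨hC, hB, hA⟩, (hReq true y r).1 hR⟩
      · rintro ⟨⟨hC, hB, hA⟩, hr⟩
        exact ⟨⟨hC, hB⟩, (hReq true y r).2 hr, hA⟩
    · refine Pr_congr fun y r => ?_
      constructor
      · rintro ⟨hR, hA⟩; exact ⟨hA, (hReq true y r).1 hR⟩
      · rintro ⟨hA, hr⟩; exact ⟨(hReq true y r).2 hr, hA⟩
  have e2 : ∀ i : Bool, cPr M.p (Req 1 1 (fun _ => i)) (Oeq 2 (m + 1) ov)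
      = Pr M.p (fun y r => Oeq 2 (m + 1) ov y r ∧ r z = i)
        / Pr M.p (Oeq 2 (m + 1) ov) := by
    intro i
    unfold cPr
    congr 1
    refine Pr_congr fun y r => ?_
    constructor
    · rintro ⟨hR, hA⟩; exact ⟨hA, (hReq i y r).1 hR⟩
    · rintro ⟨hA, hr⟩; exact ⟨(hReq i y r).2 hr, hA⟩
  -- the tilting assumption in canonical form
  have eT : ∀ i : Bool, cPr M.p (Yeq 1 1 yv)
        (fun y r => Req 1 1 (fun _ => i) y r ∧ Yeq (1 - m) (1 - 1) yv y r ∧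
          Oeq (1 + 1) (1 + m) ov y r)
      = Pr M.p (fun y r => (Yeq 1 1 yv y r ∧ Oeq 2 (m + 1) ov y r) ∧ r z = i)
        / Pr M.p (fun y r => Oeq 2 (m + 1) ov y r ∧ r z = i) := by
    intro i
    unfold cPr
    congr 1
    · refine Pr_congr fun y r => ?_
      constructor
      · rintro ⟨hB, hR, _, hO⟩
        exact ⟨⟨hB, fun j h1 h2 => hO j (by omega) (by omega)⟩, (hReq i y r).1 hR⟩
      · rintro ⟨⟨hB, hA⟩, hr⟩
        exact ⟨hB, (hReq i y r).2 hr, fun j h1 h2 => absurd h2 (by omega),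
          fun j h1 h2 => hA j (by omega) (by omega)⟩
    · refine Pr_congr fun y r => ?_
      constructor
      · rintro ⟨hR, _, hO⟩
        exact ⟨fun j h1 h2 => hO j (by omega) (by omega), (hReq i y r).1 hR⟩
      · rintro ⟨hA, hr⟩
        exact ⟨(hReq i y r).2 hr, fun j h1 h2 => absurd h2 (by omega),
          fun j h1 h2 => hA j (by omega) (by omega)⟩
  have ht := hT 1 le_rfl (by omega) yv ov
  rw [eT true, eT false] at ht
  -- positivity
  have hq : 0 < Pr M.p (Oeq 2 (m + 1) ov) :=
    Pr_pos (p_pos M) (ywit ov true) (rwit ov true)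
      (fun j h1 h2 => obs_wit ov true true j (by omega))
  have hu : ∀ i : Bool, 0 < Pr M.p (fun y r => Oeq 2 (m + 1) ov y r ∧ r z = i) :=
    fun i => Pr_pos (p_pos M) (ywit ov true) (rwit ov i)
      ⟨fun j h1 h2 => obs_wit ov true i j (by omega), rwit_zero ov i z hz0⟩
  have hwY : ∀ (w : ℕ → Bool) (i : Bool), Yeq (K := K) 1 1 w (ywit ov (w 1)) (rwit ov i) := by
    intro w i j h1 h2
    have hj : j.1 = 0 := by omega
    simp [ywit, hj]
  have hw : ∀ i : Bool,
      0 < Pr M.p (fun y r => (Yeq 1 1 yv y r ∧ Oeq 2 (m + 1) ov y r) ∧ r z = i) :=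
    fun i => Pr_pos (p_pos M) (ywit ov (yv 1)) (rwit ov i)
      ⟨⟨hwY yv i, fun j h1 h2 => obs_wit ov (yv 1) i j (by omega)⟩, rwit_zero ov i z hz0⟩
  have hn1 : 0 < Pr M.p (fun y r => (Oeq (m + 2) (m + 2) ov y r ∧ Yeq 1 1 yv y r ∧
      Oeq 2 (m + 1) ov y r) ∧ r z = true) :=
    Pr_pos (p_pos M) (ywit ov (yv 1)) (rwit ov true)
      ⟨⟨fun j h1 h2 => obs_wit ov (yv 1) true j (by omega), hwY yv true,
        fun j h1 h2 => obs_wit ov (yv 1) true j (by omega)⟩, rwit_zero ov true z hz0⟩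
  have hc : 0 < cfun M.p m (α 1) 1 yv ov := by
    unfold cfun
    refine Finset.sum_pos (fun v _ => mul_pos (Real.exp_pos _) ?_) Finset.univ_nonempty
    unfold cPr
    refine div_pos (Pr_pos (p_pos M) (ywit ov v) (rwit ov true) ?_)
      (Pr_pos (p_pos M) (ywit ov v) (rwit ov true) ?_)
    · exact ⟨hwY (fun _ => v) true, fun j h1 h2 => rwit_zero ov true j (by omega),
        fun j h1 h2 => absurd h2 (by omega),
        fun j h1 h2 => obs_wit ov v true j (by omega)⟩
    · exact ⟨fun j h1 h2 => rwit_zero ov true j (by omega),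
        fun j h1 h2 => absurd h2 (by omega),
        fun j h1 h2 => obs_wit ov v true j (by omega)⟩
  -- r-at-0 invariance of the events
  have hOupd : ∀ (y r : Fin K → Bool) (v : Bool) (lo hi : ℕ), 2 ≤ lo →
      (Oeq (K := K) lo hi ov y (Function.update r z v) ↔ Oeq lo hi ov y r) := by
    intro y r v lo hi hlo
    have hne : ∀ j : Fin K, lo ≤ j.1 + 1 → obs y (Function.update r z v) j = obs y r j :=
      fun j h1 => obs_update_ne (fun e => by rw [e] at h1; omega) v
    exact ⟨fun h j h1 h2 => (hne j h1).symm.trans (h j h1 h2),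
      fun h j h1 h2 => (hne j h1).trans (h j h1 h2)⟩
  -- the conditional-independence (cross-product) identity
  have hcr : Pr M.p (fun y r => (Oeq (m + 2) (m + 2) ov y r ∧ Yeq 1 1 yv y r ∧
        Oeq 2 (m + 1) ov y r) ∧ r z = false)
      * Pr M.p (fun y r => (Yeq 1 1 yv y r ∧ Oeq 2 (m + 1) ov y r) ∧ r z = true)
      = Pr M.p (fun y r => (Oeq (m + 2) (m + 2) ov y r ∧ Yeq 1 1 yv y r ∧
          Oeq 2 (m + 1) ov y r) ∧ r z = true)
      * Pr M.p (fun y r => (Yeq 1 1 yv y r ∧ Oeq 2 (m + 1) ov y r) ∧ r z = false) := by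
    refine cross M hm hz0 yv ov _ _ ?_ ?_ ?_ ?_
    · intro y r v
      exact and_congr (hOupd y r v (m + 2) (m + 2) (by omega))
        (and_congr Iff.rfl (hOupd y r v 2 (m + 1) (by omega)))
    · intro y r v
      exact and_congr Iff.rfl (hOupd y r v 2 (m + 1) (by omega))
    · rintro y r ⟨_, hB, hA⟩
      exact ⟨hB z (by omega) (by omega), fun j h1 h2 => hA j (by omega) (by omega)⟩
    · rintro y r ⟨hB, hA⟩
      exact ⟨hB z (by omega) (by omega), fun j h1 h2 => hA j (by omega) (by omega)⟩
  -- assemble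
  rw [eL, e1, e2 true, e2 false]
  set q := Pr M.p (Oeq 2 (m + 1) ov) with hqd
  set u1 := Pr M.p (fun y r => Oeq 2 (m + 1) ov y r ∧ r z = true) with hu1d
  set u0 := Pr M.p (fun y r => Oeq 2 (m + 1) ov y r ∧ r z = false) with hu0d
  set w1 := Pr M.p (fun y r => (Yeq 1 1 yv y r ∧ Oeq 2 (m + 1) ov y r) ∧ r z = true) with hw1d
  set w0 := Pr M.p (fun y r => (Yeq 1 1 yv y r ∧ Oeq 2 (m + 1) ov y r) ∧ r z = false) with hw0d
  set n1 := Pr M.p (fun y r => (Oeq (m + 2) (m + 2) ov y r ∧ Yeq 1 1 yv y r ∧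
      Oeq 2 (m + 1) ov y r) ∧ r z = true) with hn1d
  set n0 := Pr M.p (fun y r => (Oeq (m + 2) (m + 2) ov y r ∧ Yeq 1 1 yv y r ∧
      Oeq 2 (m + 1) ov y r) ∧ r z = false) with hn0d
  set c := cfun M.p m (α 1) 1 yv ov with hcd
  set ε := Real.exp (α 1 * yVal (yv 1)) with hed
  have hu1 : 0 < u1 := hu true
  have hu0 : 0 < u0 := hu false
  have hw1' : 0 < w1 := hw true
  have hε : 0 < ε := Real.exp_pos _
  -- tilt, cross-multiplied
  rw [div_mul_eq_mul_div, div_div, div_eq_div_iff hu0.ne' (mul_pos hu1 hc).ne'] at ht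
  -- ht : w0 * (u1 * c) = w1 * ε * u0
  have key : n0 * (u1 * c) * w1 = n1 * (ε * u0) * w1 := by
    calc n0 * (u1 * c) * w1 = n0 * w1 * (u1 * c) := by ring
      _ = n1 * w0 * (u1 * c) := by rw [hcr]
      _ = n1 * (w0 * (u1 * c)) := by ring
      _ = n1 * (w1 * ε * u0) := by rw [ht]
      _ = n1 * (ε * u0) * w1 := by ring
  have hn0eq : n0 = n1 * (ε * u0) / (u1 * c) := by
    rw [eq_div_iff (mul_pos hu1 hc).ne']
    exact mul_right_cancel₀ hw1'.ne' key
  rw [hn0eq]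
  field_simp

end MRM
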